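/- Let G be a mixed signed, directed graph on n vertices. Then dim cone(P_G) = n − bicomp(G), where bicomp(G) is the number of components H of G whose augmentations H̃ are bipartite. -/

import Mathlib

open scoped BigOperators

namespace EdgeRing

/-- A signed edge on vertex set `Fin n`: endpoints `e.1`, `e.2.1` and sign `e.2.2`. -/
abbrev SEdge (n : ℕ) := Fin n × Fin n × ℤ

/-- A signed graph on `n` vertices: a set of signed edges (loops allowed, `e.1 = e.2.1`). -/
structure SGraph (n : ℕ) where
  E : Set (SEdge n)
  sgn_unit : ∀ e ∈ E, e.2.2 = 1 ∨ e.2.2 = -1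

variable {n : ℕ}

/-- `ρ(±ij) = ±(e_i + e_j)` (a loop at `i` gives `±2 e_i`), integer version. -/
def rhoZ (e : SEdge n) : Fin n → ℤ :=
  fun v => e.2.2 * ((if e.1 = v then 1 else 0) + (if e.2.1 = v then 1 else 0))

/-- real version of `rhoZ`. -/
def rhoR (e : SEdge n) : Fin n → ℝ := fun v => (rhoZ e v : ℝ)

def toR (a : Fin n → ℤ) : Fin n → ℝ := fun v => (a v : ℝ)

def SGraph.rhoZSet (G : SGraph n) : Set (Fin n → ℤ) := {x | ∃ e ∈ G.E, x = rhoZ e}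

def SGraph.rhoRSet (G : SGraph n) : Set (Fin n → ℝ) := {x | ∃ e ∈ G.E, x = rhoR e}

/-- `ℤρ(E(G))`: the subgroup of `ℤ^n` generated by the edge vectors. -/
def SGraph.lattice (G : SGraph n) : AddSubgroup (Fin n → ℤ) :=
  AddSubgroup.closure G.rhoZSet

/-- `ℤ₊ρ(E(G))`: the affine semigroup generated by the edge vectors. -/
def SGraph.sgp (G : SGraph n) : AddSubmonoid (Fin n → ℤ) :=
  AddSubmonoid.closure G.rhoZSet

/-- adjacency via an edge of `G` (symmetric by definition). -/
def SGraph.adj (G : SGraph n) (i j : Fin n) : Prop :=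
  ∃ e ∈ G.E, (e.1 = i ∧ e.2.1 = j) ∨ (e.1 = j ∧ e.2.1 = i)

/-- `G` is connected: any two vertices are joined by a walk. -/
def SGraph.Connected (G : SGraph n) : Prop :=
  ∀ i j : Fin n, Relation.ReflTransGen G.adj i j

/-- the vertex set of the connected component of `v`. -/
def SGraph.compSet (G : SGraph n) (v : Fin n) : Set (Fin n) :=
  {w | Relation.ReflTransGen G.adj v w}

/-- `C` is (the vertex set of) a component of `G`. -/
def SGraph.IsComp (G : SGraph n) (C : Set (Fin n)) : Prop :=
  ∃ v, C = G.compSet v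

/-- the edge `e` is incident to the vertex set `S`. -/
def incident (e : SEdge n) (S : Set (Fin n)) : Prop := e.1 ∈ S ∨ e.2.1 ∈ S

/-- the vertex set `C` is partitioned as `L ∪ R` and every edge of `G` incident to `C`
has one endpoint in `L` and one in `R`. -/
def SGraph.BipWith (G : SGraph n) (C L R : Set (Fin n)) : Prop :=
  C = L ∪ R ∧ Disjoint L R ∧
    ∀ e ∈ G.E, incident e C → ((e.1 ∈ L ∧ e.2.1 ∈ R) ∨ (e.1 ∈ R ∧ e.2.1 ∈ L))

/-- the vertex set `C` (e.g. a component) is bipartite in `G`. -/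
def SGraph.BipOn (G : SGraph n) (C : Set (Fin n)) : Prop := ∃ L R, G.BipWith C L R

/-- `L ∪ R` is a bipartition of (all of) `G`. -/
def SGraph.IsBipartition (G : SGraph n) (L R : Set (Fin n)) : Prop :=
  G.BipWith Set.univ L R

def SGraph.Bipartite (G : SGraph n) : Prop := ∃ L R, G.IsBipartition L R

/-- `comp G`: the number of connected components of `G`. -/
noncomputable def SGraph.comp (G : SGraph n) : ℕ := Nat.card {C : Set (Fin n) // G.IsComp C}

/-- `bicomp G`: the number of bipartite connected components of `G`. -/
noncomputable def SGraph.bicomp (G : SGraph n) : ℕ :=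
  Nat.card {C : Set (Fin n) // G.IsComp C ∧ G.BipOn C}

/-- the dual vector `e_L^* - e_R^*` as an element of `ℝ^n`. -/
noncomputable def dvec (L R : Set (Fin n)) : Fin n → ℝ :=
  fun v => Set.indicator L (fun _ => (1 : ℝ)) v - Set.indicator R (fun _ => (1 : ℝ)) v

/-- `L, R` witness the facet-subgraph condition for the bipartite component `C` of `H`:
`C = L ∪ R` is a bipartition, and every edge of `G` not in `H` is a positive edge
incident to `L` but not `R`, or a negative edge incident to `R` but not `L`. -/
def FacetWitness (G H : SGraph n) (C L R : Set (Fin n)) : Prop :=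
  H.BipWith C L R ∧
    ∀ e ∈ G.E \ H.E,
      (e.2.2 = 1 ∧ incident e L ∧ ¬ incident e R) ∨
      (e.2.2 = -1 ∧ incident e R ∧ ¬ incident e L)

/-- `H` is a facet subgraph of `G`. -/
def IsFacetSubgraph (G H : SGraph n) : Prop :=
  H.E ⊆ G.E ∧ H.bicomp = G.bicomp + 1 ∧
    ∀ C, H.IsComp C → H.BipOn C → ¬ G.IsComp C → ∃ L R, FacetWitness G H C L R

/-- the cone generated by `S`: all nonnegative real combinations. -/
def coneOf (S : Set (Fin n → ℝ)) : Set (Fin n → ℝ) :=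
  {x | ∃ (t : Finset (Fin n → ℝ)) (c : (Fin n → ℝ) → ℝ),
    ↑t ⊆ S ∧ (∀ y, 0 ≤ c y) ∧ x = ∑ y ∈ t, c y • y}

/-- the dimension of a subset of `ℝ^n`: dimension of its linear span. -/
noncomputable def sdim (S : Set (Fin n → ℝ)) : ℕ := Module.finrank ℝ (Submodule.span ℝ S)

/-- `F` is a face of the cone `C`, cut out by a supporting linear form. -/
def IsFaceOf (C F : Set (Fin n → ℝ)) : Prop :=
  ∃ σ : (Fin n → ℝ) →ₗ[ℝ] ℝ, (∀ x ∈ C, 0 ≤ σ x) ∧ F = C ∩ {x | σ x = 0}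

/-- `F` is a facet of the cone `C`: a proper face of dimension `dim C - 1`. -/
def IsFacetOf (C F : Set (Fin n → ℝ)) : Prop :=
  IsFaceOf C F ∧ F ≠ C ∧ sdim F + 1 = sdim C

/-- the subgraph of `G` consisting of the edges inside the vertex set `C`. -/
def SGraph.restrict (G : SGraph n) (C : Set (Fin n)) : SGraph n :=
  ⟨{e ∈ G.E | e.1 ∈ C}, fun e he => G.sgn_unit e he.1⟩

/-- Vitulli's criterion for Serre's `R₁` condition for the edge ring `k[G]`
(taken here as the definition of `R₁`). -/
def SerreR1 (G : SGraph n) : Prop :=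
  ∀ F, IsFacetOf (coneOf G.rhoRSet) F →
    ∃ σ : (Fin n → ℝ) →ₗ[ℝ] ℝ,
      (∀ x ∈ coneOf G.rhoRSet, 0 ≤ σ x) ∧
      F = coneOf G.rhoRSet ∩ {x | σ x = 0} ∧
      (∀ a ∈ G.lattice, ∃ z : ℤ, σ (toR a) = z) ∧
      (∃ a ∈ G.sgp, σ (toR a) = 1) ∧
      ((AddSubgroup.closure {a : Fin n → ℤ | a ∈ G.sgp ∧ toR a ∈ F} : AddSubgroup (Fin n → ℤ)) :
          Set (Fin n → ℤ)) = {a : Fin n → ℤ | a ∈ G.lattice ∧ σ (toR a) = 0}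

/-! ### Mixed signed, directed graphs -/

/-- A mixed signed, directed graph: signed edges `SE` (loops allowed) and
directed edges `DE` (no directed loops). -/
structure MGraph (n : ℕ) where
  SE : Set (SEdge n)
  DE : Set (Fin n × Fin n)
  sgn_unit : ∀ e ∈ SE, e.2.2 = 1 ∨ e.2.2 = -1
  no_dloop : ∀ e ∈ DE, e.1 ≠ e.2

/-- `ρ((i,j)) = e_j - e_i` for a directed edge. -/
def rhoD (e : Fin n × Fin n) : Fin n → ℤ :=
  fun v => (if e.2 = v then 1 else 0) - (if e.1 = v then 1 else 0)

def MGraph.rhoZSet (G : MGraph n) : Set (Fin n → ℤ) :=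
  {x | ∃ e ∈ G.SE, x = rhoZ e} ∪ {x | ∃ e ∈ G.DE, x = rhoD e}

def MGraph.rhoRSet (G : MGraph n) : Set (Fin n → ℝ) :=
  {x | ∃ a ∈ G.rhoZSet, x = toR a}

/-- `ℤρ(E(G))` for a mixed signed, directed graph. -/
def MGraph.lattice (G : MGraph n) : AddSubgroup (Fin n → ℤ) :=
  AddSubgroup.closure G.rhoZSet

def MGraph.adj (G : MGraph n) (i j : Fin n) : Prop :=
  (∃ e ∈ G.SE, (e.1 = i ∧ e.2.1 = j) ∨ (e.1 = j ∧ e.2.1 = i)) ∨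
  (∃ e ∈ G.DE, (e.1 = i ∧ e.2 = j) ∨ (e.1 = j ∧ e.2 = i))

def MGraph.Connected (G : MGraph n) : Prop :=
  ∀ i j : Fin n, Relation.ReflTransGen G.adj i j

def MGraph.compSet (G : MGraph n) (v : Fin n) : Set (Fin n) :=
  {w | Relation.ReflTransGen G.adj v w}

def MGraph.IsComp (G : MGraph n) (C : Set (Fin n)) : Prop :=
  ∃ v, C = G.compSet v

noncomputable def MGraph.comp (G : MGraph n) : ℕ := Nat.card {C : Set (Fin n) // G.IsComp C}

/-- the directed edge `e` is incident to the vertex set `S`. -/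
def dincident (e : Fin n × Fin n) (S : Set (Fin n)) : Prop := e.1 ∈ S ∨ e.2 ∈ S

/-- Bipartiteness of the augmented signed graph of `G` on the vertex set `C`,
expressed on `G` itself: `C = L ∪ R`, every signed edge incident to `C` crosses
between `L` and `R`, and every directed edge incident to `C` has both endpoints
in the same part (its artificial vertex lies on the other side). -/
def MGraph.BipWith (G : MGraph n) (C L R : Set (Fin n)) : Prop :=
  C = L ∪ R ∧ Disjoint L R ∧
    (∀ e ∈ G.SE, incident e C → ((e.1 ∈ L ∧ e.2.1 ∈ R) ∨ (e.1 ∈ R ∧ e.2.1 ∈ L))) ∧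
    (∀ e ∈ G.DE, dincident e C → ((e.1 ∈ L ∧ e.2 ∈ L) ∨ (e.1 ∈ R ∧ e.2 ∈ R)))

def MGraph.BipOn (G : MGraph n) (C : Set (Fin n)) : Prop := ∃ L R, G.BipWith C L R

def MGraph.IsBipartition (G : MGraph n) (L R : Set (Fin n)) : Prop :=
  G.BipWith Set.univ L R

def MGraph.Bipartite (G : MGraph n) : Prop := ∃ L R, G.IsBipartition L R

/-- number of components of `G` whose augmentation is bipartite. -/
noncomputable def MGraph.bicomp (G : MGraph n) : ℕ :=
  Nat.card {C : Set (Fin n) // G.IsComp C ∧ G.BipOn C}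

/-- facet-subgraph witness for mixed signed, directed graphs. -/
def MFacetWitness (G H : MGraph n) (C L R : Set (Fin n)) : Prop :=
  H.BipWith C L R ∧
    (∀ e ∈ G.SE \ H.SE,
      (e.2.2 = 1 ∧ incident e L ∧ ¬ incident e R) ∨
      (e.2.2 = -1 ∧ incident e R ∧ ¬ incident e L)) ∧
    (∀ e ∈ G.DE \ H.DE, (e.2 ∈ L ∧ e.1 ∉ L) ∨ (e.1 ∈ R ∧ e.2 ∉ R))

/-- `H` is a facet subgraph of the mixed signed, directed graph `G`. -/
def IsMFacetSubgraph (G H : MGraph n) : Prop :=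
  H.SE ⊆ G.SE ∧ H.DE ⊆ G.DE ∧ H.bicomp = G.bicomp + 1 ∧
    ∀ C, H.IsComp C → H.BipOn C → ¬ G.IsComp C → ∃ L R, MFacetWitness G H C L R

/-! ### Auxiliary development for Statement 18 -/

section Stmt18Aux

variable {n : ℕ}

lemma MGraph.adj_symm (G : MGraph n) {i j : Fin n} (h : G.adj i j) : G.adj j i := by
  rcases h with ⟨e, he, h | h⟩ | ⟨e, he, h | h⟩
  · exact Or.inl ⟨e, he, Or.inr h⟩
  · exact Or.inl ⟨e, he, Or.inl h⟩
  · exact Or.inr ⟨e, he, Or.inr h⟩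
  · exact Or.inr ⟨e, he, Or.inl h⟩

lemma MGraph.mem_compSet_self (G : MGraph n) (v : Fin n) : v ∈ G.compSet v :=
  Relation.ReflTransGen.refl

lemma MGraph.compSet_mono (G : MGraph n) {v w u : Fin n} (hw : w ∈ G.compSet v)
    (h : G.adj w u) : u ∈ G.compSet v := Relation.ReflTransGen.tail hw h

lemma MGraph.compSet_eq (G : MGraph n) {v w : Fin n} (h : w ∈ G.compSet v) :
    G.compSet w = G.compSet v := by
  have hsym : Symmetric (Relation.ReflTransGen G.adj) :=
    by haveI : Std.Symm G.adj := ⟨fun _ _ h => G.adj_symm h⟩; exact fun _ _ h => Relation.ReflTransGen.symmetric.symm _ _ h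
  ext u
  exact ⟨fun hu => Relation.ReflTransGen.trans h hu,
    fun hu => Relation.ReflTransGen.trans (hsym h) hu⟩

/-- a "harmonic" vector: orthogonality relations coming from the edges. -/
def MGraph.Harm (G : MGraph n) (y : Fin n → ℝ) : Prop :=
  (∀ e ∈ G.SE, y e.1 + y e.2.1 = 0) ∧ (∀ e ∈ G.DE, y e.2 = y e.1)

lemma MGraph.adj_of_SE (G : MGraph n) {e : SEdge n} (he : e ∈ G.SE) : G.adj e.1 e.2.1 :=
  Or.inl ⟨e, he, Or.inl ⟨rfl, rfl⟩⟩

lemma MGraph.adj_of_DE (G : MGraph n) {e : Fin n × Fin n} (he : e ∈ G.DE) : G.adj e.1 e.2 :=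
  Or.inr ⟨e, he, Or.inl ⟨rfl, rfl⟩⟩

lemma MGraph.harm_comp (G : MGraph n) {y : Fin n → ℝ} (h : G.Harm y) {v w : Fin n}
    (hw : w ∈ G.compSet v) : y w = y v ∨ y w = -y v := by
  induction hw with
  | refl => exact Or.inl rfl
  | tail _ hbc ih =>
    have hstep : ∀ {a b : Fin n}, G.adj a b → y b = y a ∨ y b = -y a := by
      intro a b hab
      rcases hab with ⟨e, he, ⟨h1, h2⟩ | ⟨h1, h2⟩⟩ | ⟨e, he, ⟨h1, h2⟩ | ⟨h1, h2⟩⟩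
      · have := h.1 e he; right; rw [h1, h2] at this; linarith
      · have := h.1 e he; right; rw [h1, h2] at this; linarith
      · have := h.2 e he; left; rw [h1, h2] at this; exact this
      · have := h.2 e he; left; rw [h1, h2] at this; exact this.symm
    rcases ih with ih | ih <;> rcases hstep hbc with hs | hs <;>
      [left; right; right; left] <;> rw [hs, ih] <;> ring

lemma MGraph.harm_zero_of_not_bip (G : MGraph n) {y : Fin n → ℝ} (h : G.Harm y) {v : Fin n}
    (hb : ¬ G.BipOn (G.compSet v)) : y v = 0 := by
  by_contra hyv
  apply hb
  refine ⟨{w | w ∈ G.compSet v ∧ y w = y v}, {w | w ∈ G.compSet v ∧ y w = -y v}, ?_, ?_, ?_, ?_⟩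
  · ext w
    constructor
    · intro hw
      rcases G.harm_comp h hw with h1 | h1
      · exact Or.inl ⟨hw, h1⟩
      · exact Or.inr ⟨hw, h1⟩
    · rintro (⟨hw, _⟩ | ⟨hw, _⟩) <;> exact hw
  · rw [Set.disjoint_left]
    rintro w ⟨_, h1⟩ ⟨_, h2⟩
    rw [h1] at h2
    exact hyv (by linarith)
  · rintro e he hi
    have hadj := G.adj_of_SE he
    have hboth : e.1 ∈ G.compSet v ∧ e.2.1 ∈ G.compSet v := by
      rcases hi with hi | hi
      · exact ⟨hi, G.compSet_mono hi hadj⟩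
      · exact ⟨G.compSet_mono hi (G.adj_symm hadj), hi⟩
    have hsum := h.1 e he
    rcases G.harm_comp h hboth.1 with h1 | h1 <;> rcases G.harm_comp h hboth.2 with h2 | h2
    · exact absurd (by linarith : y v = 0) hyv
    · exact Or.inl ⟨⟨hboth.1, h1⟩, hboth.2, h2⟩
    · exact Or.inr ⟨⟨hboth.1, h1⟩, hboth.2, h2⟩
    · exact absurd (by linarith : y v = 0) hyv
  · rintro e he hi
    have hadj := G.adj_of_DE he
    have hboth : e.1 ∈ G.compSet v ∧ e.2 ∈ G.compSet v := by
      rcases hi with hi | hi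
      · exact ⟨hi, G.compSet_mono hi hadj⟩
      · exact ⟨G.compSet_mono hi (G.adj_symm hadj), hi⟩
    have heq := h.2 e he
    rcases G.harm_comp h hboth.1 with h1 | h1
    · exact Or.inl ⟨⟨hboth.1, h1⟩, hboth.2, by rw [heq, h1]⟩
    · exact Or.inr ⟨⟨hboth.1, h1⟩, hboth.2, by rw [heq, h1]⟩

lemma MGraph.bipWith_swap (G : MGraph n) {C L R : Set (Fin n)} (h : G.BipWith C L R) :
    G.BipWith C R L := by
  obtain ⟨h1, h2, h3, h4⟩ := h
  exact ⟨by rw [h1, Set.union_comm], h2.symm,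
    fun e he hi => (h3 e he hi).symm, fun e he hi => (h4 e he hi).symm⟩

/-- bipartite components of `G`. -/
abbrev BComp (G : MGraph n) := {C : Set (Fin n) // G.IsComp C ∧ G.BipOn C}

/-- chosen base point of a bipartite component. -/
noncomputable def MGraph.bpt (G : MGraph n) (D : BComp G) : Fin n := D.2.1.choose

lemma MGraph.bpt_spec (G : MGraph n) (D : BComp G) : D.1 = G.compSet (G.bpt D) :=
  D.2.1.choose_spec

lemma MGraph.bpt_mem (G : MGraph n) (D : BComp G) : G.bpt D ∈ D.1 := by
  rw [G.bpt_spec D]; exact G.mem_compSet_self _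

/-- chosen bipartition (L, R) of a bipartite component, with the base point in L. -/
noncomputable def MGraph.LRp (G : MGraph n) (D : BComp G) : Set (Fin n) × Set (Fin n) :=
  @ite _ (G.bpt D ∈ D.2.2.choose) (Classical.propDecidable _)
    (D.2.2.choose, D.2.2.choose_spec.choose)
    (D.2.2.choose_spec.choose, D.2.2.choose)

lemma MGraph.LRp_spec (G : MGraph n) (D : BComp G) :
    G.BipWith D.1 (G.LRp D).1 (G.LRp D).2 ∧ G.bpt D ∈ (G.LRp D).1 := by
  have hbw : G.BipWith D.1 D.2.2.choose D.2.2.choose_spec.choose :=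
    D.2.2.choose_spec.choose_spec
  have hmem : G.bpt D ∈ D.2.2.choose ∪ D.2.2.choose_spec.choose := by
    rw [← hbw.1]; exact G.bpt_mem D
  unfold MGraph.LRp
  split_ifs with h
  · exact ⟨hbw, h⟩
  · rcases hmem with hm | hm
    · exact absurd hm h
    · exact ⟨G.bipWith_swap hbw, hm⟩

/-- the global harmonic vector built from coefficients on the bipartite components. -/
noncomputable def MGraph.yfun (G : MGraph n) (c : BComp G → ℝ) : Fin n → ℝ := fun w =>
  @dite _ (G.BipOn (G.compSet w)) (Classical.propDecidable _)
    (fun h => c ⟨G.compSet w, ⟨w, rfl⟩, h⟩ *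
      (@ite _ (w ∈ (G.LRp ⟨G.compSet w, ⟨w, rfl⟩, h⟩).1) (Classical.propDecidable _) 1 (-1)))
    (fun _ => 0)

open Classical in
lemma MGraph.yfun_eval (G : MGraph n) (c : BComp G → ℝ) (D : BComp G) {w : Fin n}
    (hw : w ∈ D.1) :
    G.yfun c w = c D * (if w ∈ (G.LRp D).1 then 1 else -1) := by
  classical
  obtain ⟨v, hv⟩ := D.2.1
  have hset : G.compSet w = D.1 := by
    rw [hv] at hw ⊢; exact G.compSet_eq hw
  have hbip : G.BipOn (G.compSet w) := hset ▸ D.2.2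
  have hDe : (⟨G.compSet w, ⟨w, rfl⟩, hbip⟩ : BComp G) = D := Subtype.ext hset
  unfold MGraph.yfun
  rw [dif_pos hbip, hDe]

lemma MGraph.yfun_eval_L (G : MGraph n) (c : BComp G → ℝ) (D : BComp G) {w : Fin n}
    (hw : w ∈ D.1) (hL : w ∈ (G.LRp D).1) : G.yfun c w = c D := by
  rw [G.yfun_eval c D hw, if_pos hL, mul_one]

lemma MGraph.yfun_eval_R (G : MGraph n) (c : BComp G → ℝ) (D : BComp G) {w : Fin n}
    (hw : w ∈ D.1) (hL : w ∉ (G.LRp D).1) : G.yfun c w = -c D := by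
  rw [G.yfun_eval c D hw, if_neg hL]; ring

lemma MGraph.yfun_zero (G : MGraph n) (c : BComp G → ℝ) {w : Fin n}
    (h : ¬ G.BipOn (G.compSet w)) : G.yfun c w = 0 := by
  unfold MGraph.yfun
  rw [dif_neg h]

lemma MGraph.yfun_harm (G : MGraph n) (c : BComp G → ℝ) : G.Harm (G.yfun c) := by
  refine ⟨?_, ?_⟩
  · intro e he
    have hadj := G.adj_of_SE he
    have hb : e.2.1 ∈ G.compSet e.1 := G.compSet_mono (G.mem_compSet_self _) hadj
    by_cases h : G.BipOn (G.compSet e.1)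
    · set D : BComp G := ⟨G.compSet e.1, ⟨e.1, rfl⟩, h⟩ with hD
      have hbw := (G.LRp_spec D).1
      have hinc : incident e (G.compSet e.1) := Or.inl (G.mem_compSet_self _)
      have h1 : e.1 ∈ D.1 := G.mem_compSet_self _
      have h2 : e.2.1 ∈ D.1 := hb
      rcases hbw.2.2.1 e he hinc with ⟨hL1, hR2⟩ | ⟨hR1, hL2⟩
      · have hn2 : e.2.1 ∉ (G.LRp D).1 := fun hc => (Set.disjoint_left.mp hbw.2.1 hc) hR2
        rw [G.yfun_eval_L c D h1 hL1, G.yfun_eval_R c D h2 hn2]; ring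
      · have hn1 : e.1 ∉ (G.LRp D).1 := fun hc => (Set.disjoint_left.mp hbw.2.1 hc) hR1
        rw [G.yfun_eval_R c D h1 hn1, G.yfun_eval_L c D h2 hL2]; ring
    · have h' : ¬ G.BipOn (G.compSet e.2.1) := by rwa [G.compSet_eq hb]
      rw [G.yfun_zero c h, G.yfun_zero c h', add_zero]
  · intro e he
    have hadj := G.adj_of_DE he
    have hb : e.2 ∈ G.compSet e.1 := G.compSet_mono (G.mem_compSet_self _) hadj
    by_cases h : G.BipOn (G.compSet e.1)
    · set D : BComp G := ⟨G.compSet e.1, ⟨e.1, rfl⟩, h⟩ with hD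
      have hbw := (G.LRp_spec D).1
      have hinc : dincident e (G.compSet e.1) := Or.inl (G.mem_compSet_self _)
      have h1 : e.1 ∈ D.1 := G.mem_compSet_self _
      have h2 : e.2 ∈ D.1 := hb
      rcases hbw.2.2.2 e he hinc with ⟨hL1, hL2⟩ | ⟨hR1, hR2⟩
      · rw [G.yfun_eval_L c D h1 hL1, G.yfun_eval_L c D h2 hL2]
      · have hn1 : e.1 ∉ (G.LRp D).1 := fun hc => (Set.disjoint_left.mp hbw.2.1 hc) hR1
        have hn2 : e.2 ∉ (G.LRp D).1 := fun hc => (Set.disjoint_left.mp hbw.2.1 hc) hR2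
        rw [G.yfun_eval_R c D h1 hn1, G.yfun_eval_R c D h2 hn2]
    · have h' : ¬ G.BipOn (G.compSet e.2) := by rwa [G.compSet_eq hb]
      rw [G.yfun_zero c h, G.yfun_zero c h']

lemma toR_rhoZ (e : SEdge n) :
    toR (rhoZ e) = (e.2.2 : ℝ) • ((Pi.single e.1 1 : Fin n → ℝ) + Pi.single e.2.1 1) := by
  funext v
  simp only [toR, rhoZ, Pi.smul_apply, Pi.add_apply, Pi.single_apply, smul_eq_mul]
  have c1 : (v = e.1) ↔ (e.1 = v) := eq_comm
  have c2 : (v = e.2.1) ↔ (e.2.1 = v) := eq_comm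
  simp only [c1, c2]
  push_cast
  split_ifs <;> ring

lemma toR_rhoD (e : Fin n × Fin n) :
    toR (rhoD e) = (Pi.single e.2 1 : Fin n → ℝ) - Pi.single e.1 1 := by
  funext v
  simp only [toR, rhoD, Pi.sub_apply, Pi.single_apply]
  have c1 : (v = e.1) ↔ (e.1 = v) := eq_comm
  have c2 : (v = e.2) ↔ (e.2 = v) := eq_comm
  simp only [c1, c2]
  push_cast
  split_ifs <;> ring

/-- the linear functional `x ↦ ∑ v, x v * y v`. -/
noncomputable def lfun (y : Fin n → ℝ) : (Fin n → ℝ) →ₗ[ℝ] ℝ where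
  toFun x := ∑ v, x v * y v
  map_add' x x' := by simp [add_mul, Finset.sum_add_distrib]
  map_smul' r x := by simp [Finset.mul_sum, mul_assoc]

lemma lfun_single (y : Fin n → ℝ) (v : Fin n) : lfun y (Pi.single v 1) = y v := by
  simp [lfun, Pi.single_apply, ite_mul]

lemma single_eq_smul (v : Fin n) (a : ℝ) :
    (Pi.single v a : Fin n → ℝ) = a • (Pi.single v 1 : Fin n → ℝ) := by
  funext w; by_cases h : w = v <;> simp [Pi.single_apply, h]

end Stmt18Aux

/-- for a mixed signed, directed graph,
`dim cone(P_G) = n - bicomp(G)`. -/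
theorem stmt18 {n : ℕ} (G : MGraph n) :
    Module.finrank ℝ (Submodule.span ℝ G.rhoRSet) = n - G.bicomp := by
  classical
  set V := Submodule.span ℝ G.rhoRSet with hV
  -- rank-nullity via the dual annihilator
  have hrn : Module.finrank ℝ V + Module.finrank ℝ V.dualAnnihilator = n := by
    have h := Submodule.finrank_quotient_add_finrank V
    have h2 : Module.finrank ℝ ((Fin n → ℝ) ⧸ V) = Module.finrank ℝ V.dualAnnihilator :=
      LinearEquiv.finrank_eq (Subspace.quotEquivAnnihilator V)
    have h3 : Module.finrank ℝ (Fin n → ℝ) = n := by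
      simp [Module.finrank_fintype_fun_eq_card]
    omega
  haveI : Fintype (BComp G) := Fintype.ofFinite _
  have hcard : G.bicomp = Fintype.card (BComp G) := Nat.card_eq_fintype_card
  -- the evaluation map on the annihilator
  let Φ : Module.Dual ℝ (Fin n → ℝ) →ₗ[ℝ] (BComp G → ℝ) :=
    { toFun := fun φ D => φ (Pi.single (G.bpt D) 1)
      map_add' := fun φ ψ => by funext D; simp
      map_smul' := fun r φ => by funext D; simp }
  let Ψ : V.dualAnnihilator →ₗ[ℝ] (BComp G → ℝ) := Φ.comp V.dualAnnihilator.subtype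
  -- membership of edge vectors in the span
  have hmemS : ∀ e ∈ G.SE, toR (rhoZ e) ∈ G.rhoRSet :=
    fun e he => ⟨rhoZ e, Or.inl ⟨e, he, rfl⟩, rfl⟩
  have hmemD : ∀ e ∈ G.DE, toR (rhoD e) ∈ G.rhoRSet :=
    fun e he => ⟨rhoD e, Or.inr ⟨e, he, rfl⟩, rfl⟩
  -- injectivity
  have hinj : Function.Injective Ψ := by
    rw [injective_iff_map_eq_zero]
    intro φ hφ0
    set y : Fin n → ℝ := fun v => (φ : Module.Dual ℝ (Fin n → ℝ)) (Pi.single v 1) with hy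
    have hann : ∀ x ∈ G.rhoRSet, (φ : Module.Dual ℝ (Fin n → ℝ)) x = 0 := fun x hx =>
      (Submodule.mem_dualAnnihilator _).mp φ.2 x (Submodule.subset_span hx)
    have hharm : G.Harm y := by
      refine ⟨fun e he => ?_, fun e he => ?_⟩
      · have h0 := hann _ (hmemS e he)
        rw [toR_rhoZ] at h0
        simp only [map_smul, map_add, smul_eq_mul] at h0
        simp only [hy]
        rcases G.sgn_unit e he with hs | hs <;> rw [hs] at h0 <;> push_cast at h0 <;> linarith
      · have h0 := hann _ (hmemD e he)
        rw [toR_rhoD] at h0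
        simp only [map_sub] at h0
        simp only [hy]
        linarith
    have hy0 : ∀ v, y v = 0 := by
      intro v
      by_cases h : G.BipOn (G.compSet v)
      · set D : BComp G := ⟨G.compSet v, ⟨v, rfl⟩, h⟩ with hD
        have hz : y (G.bpt D) = 0 := congrFun hφ0 D
        have hv : v ∈ G.compSet (G.bpt D) := by
          rw [← G.bpt_spec D]; exact G.mem_compSet_self v
        rcases G.harm_comp hharm hv with h1 | h1 <;> rw [h1, hz] <;> ring
      · exact G.harm_zero_of_not_bip hharm h
    apply Subtype.ext
    apply LinearMap.ext
    intro x
    have hx : x = ∑ v, (Pi.single v (x v) : Fin n → ℝ) := (Finset.univ_sum_single x).symm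
    rw [Submodule.coe_zero, LinearMap.zero_apply, hx, map_sum]
    refine Finset.sum_eq_zero fun v _ => ?_
    rw [single_eq_smul, map_smul, smul_eq_mul]
    have : (φ : Module.Dual ℝ (Fin n → ℝ)) (Pi.single v 1) = y v := rfl
    rw [this, hy0 v, mul_zero]
  -- surjectivity
  have hsurj : Function.Surjective Ψ := by
    intro c
    have hφann : lfun (G.yfun c) ∈ V.dualAnnihilator := by
      rw [Submodule.mem_dualAnnihilator]
      intro w hw
      refine LinearMap.mem_ker.mp (Submodule.span_le.mpr ?_ hw)
      rintro x (⟨a, ⟨e, he, rfl⟩ | ⟨e, he, rfl⟩, rfl⟩)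
      · have h1 := (G.yfun_harm c).1 e he
        simp only [SetLike.mem_coe, LinearMap.mem_ker, toR_rhoZ, map_smul, map_add,
          lfun_single, smul_eq_mul]
        rw [h1, mul_zero]
      · have h1 := (G.yfun_harm c).2 e he
        simp only [SetLike.mem_coe, LinearMap.mem_ker, toR_rhoD, map_sub, lfun_single]
        rw [h1, sub_self]
    refine ⟨⟨lfun (G.yfun c), hφann⟩, ?_⟩
    funext D
    show lfun (G.yfun c) (Pi.single (G.bpt D) 1) = c D
    rw [lfun_single]
    exact G.yfun_eval_L c D (G.bpt_mem D) (G.LRp_spec D).2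
  have hequiv : Module.finrank ℝ V.dualAnnihilator = Fintype.card (BComp G) := by
    have h4 : Module.finrank ℝ V.dualAnnihilator = Module.finrank ℝ (BComp G → ℝ) :=
      LinearEquiv.finrank_eq (LinearEquiv.ofBijective Ψ ⟨hinj, hsurj⟩)
    rw [h4, Module.finrank_fintype_fun_eq_card]
  have hble : G.bicomp ≤ n := by omega
  omega

end EdgeRing
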